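/- Let u : ℝ² → ℝ² be C¹ with Fréchet derivative Du and divergence ∇·u = tr Du, and let v : ℝ² × ℝ → ℝ² be continuous. On an interval I ⊆ ℝ, let ȳ : I → ℝ² solve ȳ′(τ) = u(ȳ(τ)) and let x : I → ℝ² solve x′(τ) = u(x(τ)) + v(x(τ), τ). Then the function M(τ) := ⟨J u(ȳ(τ)), x(τ) − ȳ(τ)⟩ is differentiable on I, with M′(τ) = (∇·u)(ȳ(τ)) M(τ) + ⟨J u(ȳ(τ)), v(x(τ), τ)⟩ + ⟨J u(ȳ(τ)), u(x(τ)) − u(ȳ(τ)) − Du(ȳ(τ))(x(τ) − ȳ(τ))⟩ for every τ ∈ I. -/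

import Mathlib

open scoped InnerProductSpace

noncomputable section

/-- The plane with its Euclidean inner product. -/
abbrev E2 : Type := EuclideanSpace ℝ (Fin 2)

/-- Rotation by +π/2 : J(x₁,x₂) = (−x₂, x₁). -/
noncomputable def Jrot : E2 → E2 :=
  fun x => (WithLp.equiv 2 (Fin 2 → ℝ)).symm ![-(x 1), x 0]

/-- Divergence of a planar vector field, as the trace of its Fréchet derivative. -/
noncomputable def div2 (u : E2 → E2) (x : E2) : ℝ :=
  LinearMap.trace ℝ E2 (fderiv ℝ u x).toLinearMap

lemma Jrot_apply (x : E2) : Jrot x 0 = -(x 1) ∧ Jrot x 1 = x 0 :=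
  ⟨rfl, rfl⟩

noncomputable def JrotL : E2 →L[ℝ] E2 :=
  LinearMap.toContinuousLinearMap
    { toFun := Jrot
      map_add' := by
        intro a b; ext i; fin_cases i <;>
          show _ = (_ : ℝ) + _ <;> simp [Jrot] <;> ring
      map_smul' := by
        intro c a; ext i; fin_cases i <;>
          show _ = (_ : ℝ) * _ <;> simp [Jrot] <;> ring }

lemma JrotL_eq : (JrotL : E2 → E2) = Jrot := rfl

lemma decomp (x : E2) :
    x = x 0 • (EuclideanSpace.basisFun (Fin 2) ℝ) 0
      + x 1 • (EuclideanSpace.basisFun (Fin 2) ℝ) 1 := by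
  ext i
  fin_cases i <;> simp [EuclideanSpace.basisFun_apply]

lemma key (A : E2 →L[ℝ] E2) (a b : E2) :
    ⟪Jrot (A a), b⟫_ℝ + ⟪Jrot a, A b⟫_ℝ
      = LinearMap.trace ℝ E2 A.toLinearMap * ⟪Jrot a, b⟫_ℝ := by
  set e := EuclideanSpace.basisFun (Fin 2) ℝ with he
  have htr : LinearMap.trace ℝ E2 A.toLinearMap
      = A (e 0) 0 + A (e 1) 1 := by
    rw [LinearMap.trace_eq_matrix_trace ℝ e.toBasis]
    simp [Matrix.trace, LinearMap.toMatrix_apply, Fin.sum_univ_two, he,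
      EuclideanSpace.basisFun_repr]
  have happly : ∀ y : E2, ∀ i, A y i = y 0 * A (e 0) i + y 1 * A (e 1) i := by
    intro y i
    conv_lhs => rw [decomp y]
    simp [he, map_add, map_smul]
  simp only [PiLp.inner_apply, RCLike.inner_apply, Fin.sum_univ_two, conj_trivial,
    (Jrot_apply _).1, (Jrot_apply _).2, htr]
  rw [happly a 0, happly a 1, happly b 0, happly b 1]
  ring

/-- **Exact evolution equation for the Melnikov-type displacement function.**
If on an interval `I` the curve `ȳ` solves the steady flow `ȳ′ = u(ȳ)` and `x`
solves the agitated flow `x′ = u(x) + v(x,τ)`, then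
`M(τ) = ⟨J u(ȳ(τ)), x(τ) − ȳ(τ)⟩` is differentiable on `I` with
`M′ = (∇·u)(ȳ) M + ⟨J u(ȳ), v(x,τ)⟩ + ⟨J u(ȳ), u(x) − u(ȳ) − Du(ȳ)(x − ȳ)⟩`. -/
theorem melnikov_evolution
    (u : E2 → E2) (hu : ContDiff ℝ 1 u)
    (v : E2 → ℝ → E2) (hv : Continuous (Function.uncurry v))
    (I : Set ℝ) (hI : I.OrdConnected)
    (ybar : ℝ → E2) (x : ℝ → E2)
    (hybar : ∀ τ ∈ I, HasDerivWithinAt ybar (u (ybar τ)) I τ)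
    (hx : ∀ τ ∈ I, HasDerivWithinAt x (u (x τ) + v (x τ) τ) I τ) :
    ∀ τ ∈ I,
      HasDerivWithinAt (fun σ => ⟪Jrot (u (ybar σ)), x σ - ybar σ⟫_ℝ)
        (div2 u (ybar τ) * ⟪Jrot (u (ybar τ)), x τ - ybar τ⟫_ℝ
          + ⟪Jrot (u (ybar τ)), v (x τ) τ⟫_ℝ
          + ⟪Jrot (u (ybar τ)),
              u (x τ) - u (ybar τ) - fderiv ℝ u (ybar τ) (x τ - ybar τ)⟫_ℝ)
        I τ := by
  intro τ hτ
  set A := fderiv ℝ u (ybar τ) with hA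
  have huy : HasDerivWithinAt (fun σ => u (ybar σ)) (A (u (ybar τ))) I τ :=
    (hu.differentiable one_ne_zero (ybar τ)).hasFDerivAt.comp_hasDerivWithinAt τ (hybar τ hτ)
  have hJ : HasDerivWithinAt (fun σ => Jrot (u (ybar σ)))
      (JrotL (A (u (ybar τ)))) I τ := by
    have := JrotL.hasFDerivAt.comp_hasDerivWithinAt τ huy
    exact this
  have hsub : HasDerivWithinAt (fun σ => x σ - ybar σ)
      ((u (x τ) + v (x τ) τ) - u (ybar τ)) I τ := (hx τ hτ).sub (hybar τ hτ)
  have hM := hJ.inner (𝕜 := ℝ) hsub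
  refine HasDerivWithinAt.congr_deriv hM ?_
  have hkey := key A (u (ybar τ)) (x τ - ybar τ)
  have : (JrotL (A (u (ybar τ))) : E2) = Jrot (A (u (ybar τ))) := rfl
  rw [this]
  simp only [div2, ← hA, inner_sub_right, inner_add_right, map_sub] at hkey ⊢
  linarith [hkey]
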